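/- Let S₀, S₁, … be a [0,1]-valued random process adapted to an i.i.d. fair-coin sequence B₁, B₂, …, satisfying S_{n+1} ≤ 2·S_n when B_{n+1} = 0 and S_{n+1} ≤ 2·S_n² when B_{n+1} = 1. Fix 0 < β < 1/2, η > 0, and δ > δ'(η) where δ'(η) = 2·(8η)^{log₂ φ} with φ = (1+√5)/2. Then there exists n₀ depending only on β and δ − δ'(η) such that if S₀ ≤ η, then Pr(S_n ≤ 2^{−2^{nβ}} for all n ≥ n₀) ≥ 1 − δ. -/

import Mathlib

open MeasureTheory ProbabilityTheory Finset
open scoped ENNReal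

/-- `δ'(η) = 2·(8η)^{log₂ φ}` with `φ = (1+√5)/2` the golden ratio. -/
noncomputable def deltaP (η : ℝ) : ℝ :=
  2 * (8 * η) ^ Real.logb 2 ((1 + Real.sqrt 5) / 2)


noncomputable def phiR : ℝ := (1 + Real.sqrt 5) / 2

lemma sqrt5_lt : Real.sqrt 5 < 3 := by
  rw [show (3:ℝ) = Real.sqrt 9 by rw [show (9:ℝ) = 3^2 by norm_num, Real.sqrt_sq]; norm_num]
  exact Real.sqrt_lt_sqrt (by norm_num) (by norm_num)

lemma sqrt5_gt : 2 < Real.sqrt 5 := by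
  rw [show (2:ℝ) = Real.sqrt 4 by rw [show (4:ℝ) = 2^2 by norm_num, Real.sqrt_sq]; norm_num]
  exact Real.sqrt_lt_sqrt (by norm_num) (by norm_num)

lemma one_lt_phiR : 1 < phiR := by unfold phiR; nlinarith [sqrt5_gt]
lemma phiR_pos : 0 < phiR := lt_trans one_pos one_lt_phiR
lemma phiR_le_two : phiR ≤ 2 := by unfold phiR; nlinarith [sqrt5_lt]
lemma phiR_sq : phiR ^ 2 = phiR + 1 := by
  have h5 : Real.sqrt 5 ^ 2 = 5 := Real.sq_sqrt (by norm_num)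
  unfold phiR; nlinarith [h5]

/-- key golden ratio inequality -/
lemma phiR_key {u : ℝ} (hu : 3 ≤ u) :
    phiR ^ (3 - 2*u) + phiR ^ (4 - u) ≤ 2 * phiR ^ (3 - u) := by
  have h1 : (1:ℝ) ≤ phiR := le_of_lt one_lt_phiR
  have hp := phiR_pos
  have e1 : phiR ^ (3 - 2*u) = phiR ^ (3 - u) * phiR ^ (-u) := by
    rw [← Real.rpow_add hp]; ring_nf
  have e2 : phiR ^ (4 - u) = phiR ^ (3 - u) * phiR ^ (1:ℝ) := by
    rw [← Real.rpow_add hp]; ring_nf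
  have h2 : phiR ^ (-u) ≤ phiR ^ (-(2:ℝ)) :=
    Real.rpow_le_rpow_of_exponent_le h1 (by linarith)
  have h3 : phiR ^ (-(2:ℝ)) = (phiR + 1)⁻¹ := by
    rw [Real.rpow_neg (le_of_lt hp), show ((2:ℝ)) = ((2:ℕ):ℝ) by norm_num,
      Real.rpow_natCast, phiR_sq]
  have h4 : (phiR + 1)⁻¹ ≤ 2 - phiR := by
    rw [inv_le_iff_one_le_mul₀ (by linarith)]
    nlinarith [phiR_sq, phiR_le_two]
  have h5 : phiR ^ (-u) + phiR ^ (1:ℝ) ≤ 2 := by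
    rw [Real.rpow_one]; linarith
  have hpos : (0:ℝ) < phiR ^ (3 - u) := Real.rpow_pos_of_pos hp _
  calc phiR ^ (3 - 2*u) + phiR ^ (4 - u)
      = phiR ^ (3 - u) * (phiR ^ (-u) + phiR ^ (1:ℝ)) := by rw [e1, e2]; ring
    _ ≤ phiR ^ (3 - u) * 2 := by
        exact mul_le_mul_of_nonneg_left h5 (le_of_lt hpos)
    _ = 2 * phiR ^ (3 - u) := by ring

def stepW (u : ℝ) (b : Bool) : ℝ := if b then 2 * u else u - 1

def wk (u : ℝ) (c : ℕ → Bool) : ℕ → ℝ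
  | 0 => u
  | n + 1 => stepW (wk u c n) (c n)

open Classical in
noncomputable def cntF (u : ℝ) : ℕ → ℕ
  | 0 => if u < 3 then 1 else 0
  | N + 1 => if u < 3 then 2 ^ (N + 1) else cntF (2 * u) N + cntF (u - 1) N

lemma cntF_le (N : ℕ) : ∀ u : ℝ, (cntF u N : ℝ) ≤ phiR ^ (3 - u) * 2 ^ N := by
  induction N with
  | zero =>
    intro u
    by_cases h : u < 3
    · simp only [cntF, if_pos h, pow_zero, mul_one, Nat.cast_one]
      exact Real.one_le_rpow (le_of_lt one_lt_phiR) (by linarith)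
    · simp only [cntF, if_neg h, Nat.cast_zero, pow_zero, mul_one]
      exact le_of_lt (Real.rpow_pos_of_pos phiR_pos _)
  | succ N ih =>
    intro u
    by_cases h : u < 3
    · simp only [cntF, if_pos h]
      have h1 : (1:ℝ) ≤ phiR ^ (3 - u) :=
        Real.one_le_rpow (le_of_lt one_lt_phiR) (by linarith)
      push_cast
      nlinarith [pow_pos (show (0:ℝ) < 2 by norm_num) (N+1)]
    · simp only [cntF, if_neg h]
      push_cast
      have h1 := ih (2 * u)
      have h2 := ih (u - 1)
      have h3 : (3:ℝ) - (u - 1) = 4 - u := by ring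
      rw [h3] at h2
      have key := phiR_key (not_lt.mp h)
      have h2N : (0:ℝ) ≤ 2 ^ N := by positivity
      calc (cntF (2*u) N : ℝ) + (cntF (u-1) N : ℝ)
          ≤ phiR ^ (3 - 2*u) * 2 ^ N + phiR ^ (4 - u) * 2 ^ N := by linarith
        _ = (phiR ^ (3 - 2*u) + phiR ^ (4 - u)) * 2 ^ N := by ring
        _ ≤ (2 * phiR ^ (3 - u)) * 2 ^ N := by
            exact mul_le_mul_of_nonneg_right key h2N
        _ = phiR ^ (3 - u) * 2 ^ (N + 1) := by ring


def hd (c : ℕ → Bool) (m n : ℕ) : ℕ := ((Finset.Ico m n).filter (fun k => c k = true)).card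
def tl (c : ℕ → Bool) (m n : ℕ) : ℕ := ((Finset.Ico m n).filter (fun k => ¬ (c k = true))).card

lemma hd_add_tl (c : ℕ → Bool) (m n : ℕ) : hd c m n + tl c m n = n - m := by
  unfold hd tl
  rw [Finset.card_filter_add_card_filter_not, Nat.card_Ico m n]

lemma hd_succ (c : ℕ → Bool) {m n : ℕ} (h : m ≤ n) :
    hd c m (n+1) = hd c m n + (if c n = true then 1 else 0) := by
  unfold hd
  rw [Nat.Ico_succ_right_eq_insert_Ico h, Finset.filter_insert]
  by_cases hc : c n = true
  · rw [if_pos hc, if_pos hc, Finset.card_insert_of_notMem (by simp)]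
  · rw [if_neg hc, if_neg hc, add_zero]

lemma tl_succ (c : ℕ → Bool) {m n : ℕ} (h : m ≤ n) :
    tl c m (n+1) = tl c m n + (if c n = true then 0 else 1) := by
  unfold tl
  rw [Nat.Ico_succ_right_eq_insert_Ico h, Finset.filter_insert]
  by_cases hc : c n = true
  · rw [if_pos hc, if_neg (by simp [hc])]; simp
  · rw [if_neg hc, if_pos (by simp [hc]), Finset.card_insert_of_notMem (by simp)]

/-- Multiplicative growth lemma: if the walk stays `≥ A` on `[m, n)` and
`1 ≤ A * (1 - q)`, then heads multiply by 2 and tails by at least `q`. -/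
lemma grow {c : ℕ → Bool} {u A q : ℝ} (hq0 : 0 ≤ q) (hq1 : q ≤ 1)
    (hA1 : 1 ≤ A * (1 - q)) {m : ℕ} :
    ∀ n, m ≤ n → (∀ k, m ≤ k → k < n → A ≤ wk u c k) →
    wk u c m * 2 ^ hd c m n * q ^ tl c m n ≤ wk u c n := by
  intro n
  induction n with
  | zero => intro h _; interval_cases m; simp [hd, tl]
  | succ n ih =>
    intro hmn hlow
    rcases Nat.lt_or_ge m (n+1) with hlt | hge
    · have hmn' : m ≤ n := Nat.lt_succ_iff.mp hlt
      have ihn := ih hmn' (fun k hk1 hk2 => hlow k hk1 (Nat.lt_succ_of_lt hk2))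
      have hwn : A ≤ wk u c n := hlow n hmn' (Nat.lt_succ_self n)
      rw [hd_succ c hmn', tl_succ c hmn']
      show wk u c m * 2 ^ _ * q ^ _ ≤ stepW (wk u c n) (c n)
      unfold stepW
      by_cases hc : c n = true
      · rw [if_pos hc, if_pos hc, if_pos hc, pow_succ, add_zero]
        calc wk u c m * (2 ^ hd c m n * 2) * q ^ tl c m n
            = 2 * (wk u c m * 2 ^ hd c m n * q ^ tl c m n) := by ring
          _ ≤ 2 * wk u c n := by linarith [ihn]
      · rw [if_neg hc, if_neg hc, if_neg hc, pow_succ, add_zero]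
        have hq : q * wk u c n ≤ wk u c n - 1 := by nlinarith
        calc wk u c m * 2 ^ hd c m n * (q ^ tl c m n * q)
            = q * (wk u c m * 2 ^ hd c m n * q ^ tl c m n) := by ring
          _ ≤ q * wk u c n := by nlinarith [ihn]
          _ ≤ wk u c n - 1 := hq
    · have hm : m = n + 1 := le_antisymm hmn hge
      subst hm; simp [hd, tl]


def extB {N : ℕ} (v : Fin N → Bool) : ℕ → Bool := fun i => if h : i < N then v ⟨i, h⟩ else false

lemma wk_congr {u : ℝ} {c c' : ℕ → Bool} : ∀ {k : ℕ}, (∀ i, i < k → c i = c' i) →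
    wk u c k = wk u c' k := by
  intro k
  induction k with
  | zero => intro _; rfl
  | succ k ih =>
    intro h
    show stepW (wk u c k) (c k) = stepW (wk u c' k) (c' k)
    rw [ih (fun i hi => h i (Nat.lt_succ_of_lt hi)), h k (Nat.lt_succ_self k)]

lemma wk_shift {u : ℝ} {c : ℕ → Bool} : ∀ k : ℕ,
    wk u c (k + 1) = wk (stepW u (c 0)) (fun i => c (i + 1)) k := by
  intro k
  induction k with
  | zero => rfl
  | succ k ih =>
    show stepW (wk u c (k+1)) (c (k+1)) = stepW (wk (stepW u (c 0)) _ k) _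
    rw [ih]

def hitsP (u : ℝ) (N : ℕ) (v : Fin N → Bool) : Prop := ∃ k ≤ N, wk u (extB v) k < 3

open Classical in
lemma hits_cons {u : ℝ} {N : ℕ} (b : Bool) (w : Fin N → Bool) :
    hitsP u (N + 1) (Fin.cons b w) ↔ (u < 3 ∨ hitsP (stepW u b) N w) := by
  have h0 : extB (Fin.cons b w : Fin (N+1) → Bool) 0 = b := by
    simp [extB, Fin.cons]
  have hsh : ∀ j : ℕ, j ≤ N →
      wk u (extB (Fin.cons b w : Fin (N+1) → Bool)) (j + 1) = wk (stepW u b) (extB w) j := by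
    intro j hj
    rw [wk_shift, h0]
    apply wk_congr
    intro i hi
    have hiN : i < N := lt_of_lt_of_le hi hj
    simp only [extB, dif_pos (Nat.succ_lt_succ hiN), dif_pos hiN]
    exact @Fin.cons_succ N (fun _ => Bool) b w ⟨i, hiN⟩
  constructor
  · rintro ⟨k, hk, hlt⟩
    match k with
    | 0 => exact Or.inl hlt
    | j + 1 =>
      right
      have hj : j ≤ N := Nat.lt_succ_iff.mp hk
      exact ⟨j, hj, by rw [← hsh j hj]; exact hlt⟩
  · rintro (h | ⟨j, hj, hlt⟩)
    · exact ⟨0, Nat.zero_le _, h⟩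
    · exact ⟨j + 1, Nat.succ_le_succ hj, by rw [hsh j hj]; exact hlt⟩

open Classical in
lemma cntF_eq_card (N : ℕ) : ∀ u : ℝ,
    ((univ : Finset (Fin N → Bool)).filter (hitsP u N)).card = cntF u N := by
  induction N with
  | zero =>
    intro u
    by_cases h : u < 3
    · rw [show cntF u 0 = 1 from if_pos h]
      rw [Finset.filter_true_of_mem (fun v _ => ⟨0, le_refl 0, h⟩)]
      simp
    · rw [show cntF u 0 = 0 from if_neg h]
      rw [Finset.filter_false_of_mem]
      · simp
      · rintro v _ ⟨k, hk, hlt⟩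
        interval_cases k
        exact h hlt
  | succ N ih =>
    intro u
    rw [Finset.card_filter]
    rw [← Equiv.sum_comp (Fin.consEquiv (fun _ : Fin (N+1) => Bool))
      (fun v => if hitsP u (N+1) v then 1 else 0)]
    rw [Fintype.sum_prod_type]
    by_cases h : u < 3
    · rw [show cntF u (N+1) = 2^(N+1) from if_pos h]
      have : ∀ (b : Bool) (w : Fin N → Bool),
          (if hitsP u (N+1) ((Fin.consEquiv _) (b, w)) then (1:ℕ) else 0) = 1 := by
        intro b w
        rw [if_pos ⟨0, Nat.zero_le _, h⟩]
      simp only [this]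
      simp [Finset.card_univ, Fintype.card_fun]
      ring
    · rw [show cntF u (N+1) = cntF (2*u) N + cntF (u-1) N from if_neg h]
      have key : ∀ (b : Bool) (w : Fin N → Bool),
          (if hitsP u (N+1) ((Fin.consEquiv _) (b, w)) then (1:ℕ) else 0)
          = if hitsP (stepW u b) N w then 1 else 0 := by
        intro b w
        have : hitsP u (N+1) ((Fin.consEquiv _) (b, w)) ↔ hitsP (stepW u b) N w := by
          rw [show ((Fin.consEquiv (fun _ : Fin (N+1) => Bool)) (b, w)) = Fin.cons b w from rfl]
          rw [hits_cons]
          exact or_iff_right h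
        by_cases hh : hitsP (stepW u b) N w
        · rw [if_pos (this.mpr hh), if_pos hh]
        · rw [if_neg (fun c => hh (this.mp c)), if_neg hh]
      simp only [key]
      rw [Fintype.sum_bool]
      rw [← Finset.card_filter, ← Finset.card_filter, ih, ih]
      show cntF (stepW u true) N + cntF (stepW u false) N = _
      rfl


open Classical in
/-- Counting Chernoff bound: the number of boolean vectors with few trues in window `Wd`. -/
lemma chernoff_count (L : ℕ) (Wd : Finset (Fin L)) (x z : ℝ) (hx : 0 ≤ x) (hz : 1 ≤ z) :
    (((univ : Finset (Fin L → Bool)).filter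
        (fun v => ((Wd.filter (fun i => v i = true)).card : ℝ) ≤ x)).card : ℝ)
      ≤ z ^ x * (1 + 1/z) ^ Wd.card * 2 ^ (L - Wd.card) := by
  have hz0 : (0:ℝ) < z := lt_of_lt_of_le one_pos hz
  set g : Fin L → Bool → ℝ := fun i b => if i ∈ Wd ∧ b = true then 1/z else 1 with hg
  have prodg : ∀ v : Fin L → Bool,
      (∏ i, g i (v i)) = (1/z) ^ ((Wd.filter (fun i => v i = true)).card) := by
    intro v
    rw [show (∏ i, g i (v i)) = ∏ i ∈ univ, (if (i ∈ Wd ∧ v i = true) then (1/z) else 1) from rfl]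
    rw [Finset.prod_ite (fun _ => (1/z)) (fun _ => (1:ℝ)), Finset.prod_const, Finset.prod_const,
      one_pow, mul_one]
    congr 2
    ext i
    simp
  have nonneg : ∀ v : Fin L → Bool, (0:ℝ) ≤ ∏ i, g i (v i) := by
    intro v
    rw [prodg]
    positivity
  have key : ∀ v ∈ (univ : Finset (Fin L → Bool)).filter
      (fun v => ((Wd.filter (fun i => v i = true)).card : ℝ) ≤ x),
      (1:ℝ) ≤ z ^ x * ∏ i, g i (v i) := by
    intro v hv
    rw [Finset.mem_filter] at hv
    set h := (Wd.filter (fun i => v i = true)).card with hh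
    rw [prodg]
    have h1 : (z:ℝ) ^ (h:ℕ) ≤ z ^ x := by
      rw [← Real.rpow_natCast z h]
      exact Real.rpow_le_rpow_of_exponent_le hz hv.2
    have h2 : (0:ℝ) < (1/z) ^ h := by positivity
    calc (1:ℝ) = z ^ h * (1/z) ^ h := by
          rw [← mul_pow]; rw [mul_one_div, div_self (ne_of_gt hz0), one_pow]
      _ ≤ z ^ x * (1/z) ^ h := mul_le_mul_of_nonneg_right h1 (le_of_lt h2)
  calc (((univ : Finset (Fin L → Bool)).filter
        (fun v => ((Wd.filter (fun i => v i = true)).card : ℝ) ≤ x)).card : ℝ)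
      = ∑ v ∈ (univ : Finset (Fin L → Bool)).filter
          (fun v => ((Wd.filter (fun i => v i = true)).card : ℝ) ≤ x), (1:ℝ) := by
        rw [Finset.sum_const, nsmul_eq_mul, mul_one]
    _ ≤ ∑ v ∈ (univ : Finset (Fin L → Bool)).filter
          (fun v => ((Wd.filter (fun i => v i = true)).card : ℝ) ≤ x),
          z ^ x * ∏ i, g i (v i) := Finset.sum_le_sum key
    _ ≤ ∑ v : Fin L → Bool, z ^ x * ∏ i, g i (v i) := by
        apply Finset.sum_le_sum_of_subset_of_nonneg (Finset.filter_subset _ _)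
        intro v _ _
        have := nonneg v
        have hzx : (0:ℝ) ≤ z ^ x := le_of_lt (Real.rpow_pos_of_pos hz0 x)
        positivity
    _ = z ^ x * ∑ v : Fin L → Bool, ∏ i, g i (v i) := by rw [Finset.mul_sum]
    _ = z ^ x * ∏ i : Fin L, (∑ b : Bool, g i b) := by
        rw [Finset.prod_univ_sum (fun _ => (univ : Finset Bool)) g]
        rw [Fintype.piFinset_univ]
    _ = z ^ x * (1 + 1/z) ^ Wd.card * 2 ^ (L - Wd.card) := by
        have : ∀ i : Fin L, (∑ b : Bool, g i b) = if i ∈ Wd then (1 + 1/z) else 2 := by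
          intro i
          rw [Fintype.sum_bool]
          by_cases hi : i ∈ Wd
          · simp [hg, hi]; ring
          · simp [hg, hi]; norm_num
        rw [Finset.prod_congr rfl (fun i _ => this i)]
        rw [Finset.prod_ite (fun _ => ((1:ℝ) + 1/z)) (fun _ => (2:ℝ)), Finset.prod_const,
          Finset.prod_const]
        rw [Finset.filter_univ_mem]
        have hcc : (univ.filter (fun i : Fin L => ¬ i ∈ Wd)) = Wdᶜ := by
          ext i; simp
        rw [hcc, Finset.card_compl, Fintype.card_fin, mul_assoc]


variable {Ω : Type} [MeasurableSpace Ω] {μ : Measure Ω}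

lemma fair_bool [IsProbabilityMeasure μ] (B : ℕ → Ω → Bool) (hBmeas : ∀ n, Measurable (B n))
    (hfair : ∀ n, μ (B n ⁻¹' {true}) = 1 / 2) :
    ∀ n (b : Bool), μ (B n ⁻¹' {b}) = 2⁻¹ := by
  intro n b
  cases b
  · have hc : B n ⁻¹' {false} = (B n ⁻¹' {true})ᶜ := by
      ext ω
      simp only [Set.mem_preimage, Set.mem_singleton_iff, Set.mem_compl_iff]
      cases h : B n ω <;> simp
    rw [hc, prob_compl_eq_one_sub ((hBmeas n) (by trivial)), hfair n]
    rw [one_div]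
    exact ENNReal.one_sub_inv_two
  · rw [hfair n, one_div]

open Classical in
lemma cyl_single [IsProbabilityMeasure μ] (B : ℕ → Ω → Bool) (hBmeas : ∀ n, Measurable (B n))
    (hInd : iIndepFun B μ)
    (hfair : ∀ n, μ (B n ⁻¹' {true}) = 1 / 2)
    (L : ℕ) (v : Fin L → Bool) :
    μ {ω | ∀ i : Fin L, B (i.1 + 1) ω = v i} = 2⁻¹ ^ L := by
  set Sf : Finset ℕ := (Finset.range L).image Nat.succ with hSf
  set sets : ℕ → Set Bool := fun j => {b | ∀ (h : j - 1 < L), 1 ≤ j → b = v ⟨j - 1, h⟩} with hsets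
  have hmeas : ∀ j, j ∈ Sf → MeasurableSet (sets j) := fun j _ => (Set.to_countable _).measurableSet
  have heq : {ω | ∀ i : Fin L, B (i.1 + 1) ω = v i} = ⋂ j ∈ Sf, B j ⁻¹' sets j := by
    ext ω
    simp only [Set.mem_setOf_eq, Set.mem_iInter, Set.mem_preimage, hSf, Finset.mem_image,
      Finset.mem_range, hsets]
    constructor
    · rintro h j ⟨i, hi, rfl⟩
      intro h1 _
      have : i.succ - 1 = i := rfl
      simp only [this] at h1 ⊢
      exact h ⟨i, h1⟩
    · intro h i
      have := h (i.1 + 1) ⟨i.1, i.2, rfl⟩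
      have h2 := this (by simp [Nat.lt_of_lt_of_le i.2 (le_refl L)]) (Nat.succ_le_succ (Nat.zero_le _))
      simpa using h2
  rw [heq, hInd.measure_inter_preimage_eq_mul Sf hmeas]
  have hval : ∀ j ∈ Sf, μ (B j ⁻¹' sets j) = 2⁻¹ := by
    intro j hj
    simp only [hSf, Finset.mem_image, Finset.mem_range] at hj
    obtain ⟨i, hi, rfl⟩ := hj
    have : sets i.succ = {v ⟨i, hi⟩} := by
      ext b
      simp only [hsets, Set.mem_setOf_eq, Set.mem_singleton_iff]
      constructor
      · intro h; exact h hi (Nat.succ_le_succ (Nat.zero_le _))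
      · intro h _ _; exact h
    rw [this]
    exact fair_bool B hBmeas hfair _ _
  rw [Finset.prod_congr rfl hval, Finset.prod_const]
  congr 1
  rw [hSf, Finset.card_image_of_injective _ Nat.succ_injective, Finset.card_range]

open Classical in
lemma cyl [IsProbabilityMeasure μ] (B : ℕ → Ω → Bool) (hBmeas : ∀ n, Measurable (B n))
    (hInd : iIndepFun B μ)
    (hfair : ∀ n, μ (B n ⁻¹' {true}) = 1 / 2)
    (L : ℕ) (P : (Fin L → Bool) → Prop) :
    μ {ω | P (fun i : Fin L => B (i.1 + 1) ω)} =
      (((univ : Finset (Fin L → Bool)).filter P).card : ℝ≥0∞) * 2⁻¹ ^ L := by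
  have hdecomp : {ω | P (fun i : Fin L => B (i.1 + 1) ω)} =
      ⋃ v ∈ (univ : Finset (Fin L → Bool)).filter P, {ω | ∀ i : Fin L, B (i.1 + 1) ω = v i} := by
    ext ω
    simp only [Set.mem_setOf_eq, Set.mem_iUnion, Finset.mem_filter, Finset.mem_univ, true_and]
    constructor
    · intro h
      exact ⟨fun i => B (i.1+1) ω, h, fun i => rfl⟩
    · rintro ⟨v, hv, h⟩
      have : (fun i : Fin L => B (i.1 + 1) ω) = v := funext h
      rw [this]; exact hv
  rw [hdecomp]
  rw [measure_biUnion_finset]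
  · rw [Finset.sum_congr rfl (fun v _ => cyl_single B hBmeas hInd hfair L v)]
    rw [Finset.sum_const, nsmul_eq_mul]
  · intro v hv w hw hvw
    simp only [Function.onFun]
    apply Set.disjoint_left.mpr
    intro ω h1 h2
    exact hvw (funext fun i => (h1 i).symm.trans (h2 i))
  · intro v _
    have : {ω | ∀ i : Fin L, B (i.1 + 1) ω = v i} = ⋂ i : Fin L, (B (i.1+1)) ⁻¹' {v i} := by
      ext ω; simp
    rw [this]
    exact MeasurableSet.iInter (fun i => (hBmeas _) (by trivial))


noncomputable def epsP (β : ℝ) : ℝ := (1/2 - β)/8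
noncomputable def thetaP (β : ℝ) : ℝ := (2 + epsP β) / (2 * (1 + epsP β) ^ ((1:ℝ)/2 + epsP β))
noncomputable def MP (β : ℝ) : ℕ := ⌈(1 + epsP β)/(epsP β)⌉₊
noncomputable def N1P (β ρ : ℝ) : ℕ :=
  ⌈Real.log (ρ * (1 - thetaP β)/2) / Real.log (thetaP β)⌉₊
noncomputable def s1P (β ρ : ℝ) : ℕ := max (16 * (MP β)) (N1P β ρ)
noncomputable def n0P (β ρ : ℝ) : ℕ :=
  s1P β ρ + N1P β ρ + ⌈(s1P β ρ : ℝ)/(10 * epsP β)⌉₊ + 1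

section numerics
variable {β : ℝ}

lemma epsP_pos (hβ : β < 1/2) : 0 < epsP β := by unfold epsP; linarith
lemma epsP_lt (hβ0 : 0 < β) : epsP β < 1/16 := by unfold epsP; linarith

variable (hβ0 : 0 < β) (hβ : β < 1/2)
include hβ0 hβ

lemma log_one_add_eps_ge : epsP β / (1 + epsP β) ≤ Real.log (1 + epsP β) := by
  have hε := epsP_pos hβ
  set ε := epsP β
  have h1 : (0:ℝ) < 1 + ε := by linarith
  have h2 : (1:ℝ) - ε/(1+ε) = (1+ε)⁻¹ := by field_simp; ring
  have h3 := Real.add_one_le_exp (-(ε/(1+ε)))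
  rw [neg_add_eq_sub, h2] at h3
  have h4 : Real.exp (ε/(1+ε)) ≤ 1 + ε := by
    have h5 := mul_le_mul_of_nonneg_left h3 (le_of_lt (Real.exp_pos (ε/(1+ε))))
    rw [← Real.exp_add] at h5
    simp only [add_neg_cancel, Real.exp_zero] at h5
    calc Real.exp (ε/(1+ε)) = Real.exp (ε/(1+ε)) * ((1+ε)⁻¹ * (1+ε)) := by
          rw [inv_mul_cancel₀ (ne_of_gt h1), mul_one]
      _ = (Real.exp (ε/(1+ε)) * (1+ε)⁻¹) * (1+ε) := by ring
      _ ≤ 1 * (1+ε) := mul_le_mul_of_nonneg_right h5 (le_of_lt h1)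
      _ = 1 + ε := one_mul _
  calc ε/(1+ε) = Real.log (Real.exp (ε/(1+ε))) := (Real.log_exp _).symm
    _ ≤ Real.log (1+ε) := Real.log_le_log (Real.exp_pos _) h4

lemma rpow_two_eps_ge : 1 + (epsP β)^2 ≤ (1 + epsP β) ^ (2 * epsP β) := by
  have hε := epsP_pos hβ
  set ε := epsP β
  have h1 : (0:ℝ) < 1 + ε := by linarith
  rw [Real.rpow_def_of_pos h1]
  have h2 := log_one_add_eps_ge hβ0 hβ
  have h3 : ε^2 ≤ 2 * ε * Real.log (1 + ε) := by
    have h4 : 2 * ε * (ε/(1+ε)) ≤ 2 * ε * Real.log (1+ε) := by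
      apply mul_le_mul_of_nonneg_left h2 (by linarith)
    have h5 : ε^2 ≤ 2 * ε * (ε/(1+ε)) := by
      rw [mul_comm (2*ε), div_mul_eq_mul_div, le_div_iff₀ h1]
      have hε16 := epsP_lt hβ0
      nlinarith
    linarith
  calc 1 + ε^2 ≤ 1 + 2 * ε * Real.log (1+ε) := by linarith
    _ ≤ Real.exp (2 * ε * Real.log (1+ε)) := by
        have := Real.add_one_le_exp (2 * ε * Real.log (1+ε)); linarith
    _ = Real.exp (Real.log (1+ε) * (2*ε)) := by rw [mul_comm]
  
lemma thetaP_pos : 0 < thetaP β := by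
  have hε := epsP_pos hβ
  unfold thetaP
  have h1 : (0:ℝ) < 1 + epsP β := by linarith
  have := Real.rpow_pos_of_pos h1 ((1:ℝ)/2 + epsP β)
  positivity

lemma thetaP_lt_one : thetaP β < 1 := by
  have hε := epsP_pos hβ
  set ε := epsP β with hεdef
  have h1 : (0:ℝ) < 1 + ε := by linarith
  have hd : (0:ℝ) < (1 + ε) ^ ((1:ℝ)/2 + ε) := Real.rpow_pos_of_pos h1 _
  rw [thetaP, ← hεdef, div_lt_one (by positivity)]
  have hsq : ((1 + ε) ^ ((1:ℝ)/2 + ε))^2 = (1+ε) * (1+ε)^(2*ε) := by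
    rw [← Real.rpow_natCast ((1 + ε) ^ ((1:ℝ)/2 + ε)) 2, ← Real.rpow_mul (le_of_lt h1)]
    rw [show ((1:ℝ)/2 + ε) * (2:ℕ) = 1 + 2*ε by push_cast; ring]
    rw [Real.rpow_add h1, Real.rpow_one]
  have h2 := rpow_two_eps_ge hβ0 hβ
  have hε16 := epsP_lt hβ0
  have key : (2 + ε)^2 < (2 * (1 + ε) ^ ((1:ℝ)/2 + ε))^2 := by
    rw [mul_pow, hsq]
    have : (1+ε) * (1 + ε^2) ≤ (1+ε) * (1+ε)^(2*ε) :=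
      mul_le_mul_of_nonneg_left h2 (le_of_lt h1)
    nlinarith
  have h3 : (0:ℝ) ≤ 2 * (1 + ε) ^ ((1:ℝ)/2 + ε) := by positivity
  exact lt_of_pow_lt_pow_left₀ 2 h3 key

/-- per-factor identity for the Chernoff bound -/
lemma theta_factor : (1 + epsP β) ^ ((1:ℝ)/2 - epsP β) * (1 + 1/(1 + epsP β))
    = 2 * thetaP β := by
  have hε := epsP_pos hβ
  set ε := epsP β with hεdef
  have h1 : (0:ℝ) < 1 + ε := by linarith
  have hd : (0:ℝ) < (1 + ε) ^ ((1:ℝ)/2 + ε) := Real.rpow_pos_of_pos h1 _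
  rw [thetaP, ← hεdef]
  have h2 : 1 + 1/(1+ε) = (2+ε)/(1+ε) := by field_simp; ring
  rw [h2]
  have h3 : (1 + ε) ^ ((1:ℝ)/2 - ε) * (1 + ε) ^ ((1:ℝ)/2 + ε) = (1+ε) := by
    rw [← Real.rpow_add h1]; norm_num
  have hrhs : 2 * ((2+ε)/(2*(1+ε)^((1:ℝ)/2+ε))) = (2+ε)/(1+ε)^((1:ℝ)/2+ε) := by
    field_simp
  rw [hrhs, eq_div_iff (ne_of_gt hd)]
  calc (1 + ε) ^ ((1:ℝ)/2 - ε) * ((2+ε)/(1+ε)) * (1+ε)^((1:ℝ)/2+ε)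
      = ((1+ε)^((1:ℝ)/2-ε) * (1+ε)^((1:ℝ)/2+ε)) * ((2+ε)/(1+ε)) := by ring
    _ = (1+ε) * ((2+ε)/(1+ε)) := by rw [h3]
    _ = 2+ε := by field_simp

end numerics

lemma N1P_spec {β ρ : ℝ} (hβ0 : 0 < β) (hβ : β < 1/2) (hρ : 0 < ρ) :
    (thetaP β) ^ (N1P β ρ) ≤ ρ * (1 - thetaP β)/2 := by
  have hθ0 := thetaP_pos hβ0 hβ
  have hθ1 := thetaP_lt_one hβ0 hβ
  set θ := thetaP β
  set x := ρ * (1 - θ)/2 with hx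
  have hx0 : 0 < x := by
    rw [hx]; apply div_pos (mul_pos hρ (by linarith)) two_pos
  have hlogθ : Real.log θ < 0 := Real.log_neg hθ0 hθ1
  have hN1 : Real.log x / Real.log θ ≤ (N1P β ρ : ℝ) := Nat.le_ceil _
  have h2 : (N1P β ρ : ℝ) * Real.log θ ≤ Real.log x := by
    rw [div_le_iff_of_neg hlogθ] at hN1
    linarith [hN1]
  calc θ ^ (N1P β ρ) = Real.exp ((N1P β ρ : ℝ) * Real.log θ) := by
        rw [← Real.log_rpow hθ0, Real.exp_log (Real.rpow_pos_of_pos hθ0 _),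
          Real.rpow_natCast]
    _ ≤ Real.exp (Real.log x) := Real.exp_le_exp.mpr h2
    _ = x := Real.exp_log hx0
section det
variable {β : ℝ}

lemma MP_ge (hβ : β < 1/2) : (1 + epsP β)/(epsP β) ≤ (MP β : ℝ) := Nat.le_ceil _

lemma MP_ge_one (hβ : β < 1/2) : (1:ℝ) ≤ (MP β : ℝ) := by
  have h1 := MP_ge hβ
  have hε := epsP_pos hβ
  have : (1:ℝ) ≤ (1 + epsP β)/(epsP β) := by
    rw [le_div_iff₀ hε]; linarith
  linarith

lemma nat_le_three_pow (m : ℕ) : (m:ℝ) ≤ 3 ^ m := by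
  induction m with
  | zero => norm_num
  | succ m ih =>
    push_cast
    calc (m:ℝ) + 1 ≤ 3^m + 3^m := by
          have : (1:ℝ) ≤ 3^m := one_le_pow₀ (by norm_num)
          linarith
      _ ≤ 3^(m+1) := by rw [pow_succ]; nlinarith [pow_pos (show (0:ℝ) < 3 by norm_num) m]

/-- Phase 1: if the walk stays `≥ 3` and heads are frequent up to time `k ≥ 16·M`,
then the walk is at least `M` at time `k`. -/
lemma phase1 (hβ0 : 0 < β) (hβ : β < 1/2) {u : ℝ} {c : ℕ → Bool}
    (h3 : ∀ j, 3 ≤ wk u c j) {k : ℕ} (hk : 16 * MP β ≤ k)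
    (hh : ((1:ℝ)/2 - epsP β) * k ≤ (hd c 0 k : ℝ)) :
    (MP β : ℝ) ≤ wk u c k := by
  have hε := epsP_pos hβ
  have hε16 := epsP_lt hβ0
  set ε := epsP β
  set M := MP β
  have hgrow := grow (c := c) (u := u) (A := 3) (q := 2/3) (by norm_num) (by norm_num)
    (by norm_num) k (Nat.zero_le k) (fun j _ _ => h3 j)
  have hu3 : wk u c 0 = u := rfl
  have h30 : (3:ℝ) ≤ u := h3 0
  set h := hd c 0 k
  set t := tl c 0 k
  have hht : h + t = k := by rw [hd_add_tl]; omega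
  -- 2^h * (2/3)^t = 2^k / 3^t
  have hid : (2:ℝ) ^ h * (2/3) ^ t = 2 ^ k / 3 ^ t := by
    rw [div_pow, ← hht, pow_add]
    ring
  -- t ≤ (9/16) k
  have ht : (t:ℝ) ≤ (9/16) * k := by
    have h1 : (h:ℝ) + t = k := by exact_mod_cast congrArg (fun x : ℕ => (x:ℝ)) hht
    nlinarith
  have h3t : (3:ℝ) ^ t ≤ (3:ℝ) ^ ((9:ℝ)/16 * k) := by
    rw [← Real.rpow_natCast 3 t]
    exact Real.rpow_le_rpow_of_exponent_le (by norm_num) ht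
  -- r := 2 / 3^(9/16) ≥ 1 and r^16 ≥ 3
  set r : ℝ := 2 / (3:ℝ) ^ ((9:ℝ)/16) with hr
  have h3pos : (0:ℝ) < (3:ℝ) ^ ((9:ℝ)/16) := Real.rpow_pos_of_pos (by norm_num) _
  have hpow16 : ((3:ℝ) ^ ((9:ℝ)/16)) ^ (16:ℕ) = 3 ^ (9:ℕ) := by
    rw [← Real.rpow_natCast ((3:ℝ) ^ ((9:ℝ)/16)) 16, ← Real.rpow_mul (by norm_num)]
    rw [show ((9:ℝ)/16) * ((16:ℕ):ℝ) = ((9:ℕ):ℝ) by push_cast; ring]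
    rw [Real.rpow_natCast]
  have hr16 : (3:ℝ) ≤ r ^ (16:ℕ) := by
    rw [hr, div_pow, hpow16]
    rw [le_div_iff₀ (by positivity)]
    norm_num
  have hr1 : (1:ℝ) ≤ r := by
    have h16 : (1:ℝ) ≤ r ^ (16:ℕ) := by linarith
    by_contra hcon
    push_neg at hcon
    have hr0 : (0:ℝ) ≤ r := by
      rw [hr]; positivity
    have : r ^ (16:ℕ) < 1 ^ (16:ℕ) := pow_lt_pow_left₀ hcon hr0 (by norm_num)
    rw [one_pow] at this
    linarith
  -- 2^k / 3^((9/16)k) = r^k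
  have hrk : r ^ k = (2:ℝ) ^ k / (3:ℝ) ^ ((9:ℝ)/16 * k) := by
    rw [hr, div_pow]
    congr 1
    rw [← Real.rpow_natCast ((3:ℝ) ^ ((9:ℝ)/16)) k, ← Real.rpow_mul (by norm_num)]
  -- r^k ≥ M
  have hrkM : (M:ℝ) ≤ r ^ k := by
    calc (M:ℝ) ≤ 3 ^ M := nat_le_three_pow M
      _ ≤ (r ^ (16:ℕ)) ^ M := pow_le_pow_left₀ (by norm_num) hr16 M
      _ = r ^ (16 * M) := by rw [← pow_mul]
      _ ≤ r ^ k := pow_le_pow_right₀ hr1 hk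
  -- combine
  have hmain : (M:ℝ) ≤ 3 * (2 ^ h * (2/3) ^ t) := by
    rw [hid]
    have hd1 : (2:ℝ) ^ k / 3 ^ ((9:ℝ)/16 * k) ≤ 2 ^ k / 3 ^ t := by
      apply div_le_div_of_nonneg_left (by positivity) (by positivity) h3t
    calc (M:ℝ) ≤ r ^ k := hrkM
      _ = 2 ^ k / 3 ^ ((9:ℝ)/16*k) := hrk
      _ ≤ 2 ^ k / 3 ^ t := hd1
      _ ≤ 3 * (2 ^ k / 3 ^ t) := by
          nlinarith [div_pos (pow_pos (show (0:ℝ) < 2 by norm_num) k)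
            (pow_pos (show (0:ℝ) < 3 by norm_num) t)]
  calc (M:ℝ) ≤ 3 * (2 ^ h * (2/3) ^ t) := hmain
    _ ≤ u * 2 ^ h * (2/3) ^ t := by
        have : (0:ℝ) ≤ 2 ^ h * (2/3) ^ t := by positivity
        nlinarith
    _ = wk u c 0 * 2 ^ h * (2/3) ^ t := by rw [hu3]
    _ ≤ wk u c k := hgrow

set_option maxHeartbeats 2000000 in
/-- The full deterministic conclusion. -/
lemma detLemma (hβ0 : 0 < β) (hβ : β < 1/2) {u : ℝ} {c : ℕ → Bool} {s1 n0 : ℕ}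
    (hs1 : 16 * MP β ≤ s1) (hn0 : s1 + ⌈(s1:ℝ)/(10 * epsP β)⌉₊ ≤ n0)
    (h3 : ∀ j, 3 ≤ wk u c j)
    (h1 : ∀ s, s1 ≤ s → ((1:ℝ)/2 - epsP β) * s ≤ (hd c 0 s : ℝ))
    (h2 : ∀ n, n0 ≤ n → ((1:ℝ)/2 - epsP β) * ((n:ℝ) - s1) ≤ (hd c s1 n : ℝ))
    {n : ℕ} (hn : n0 ≤ n) :
    (2:ℝ) ^ ((n:ℝ) * β) ≤ wk u c n := by
  have hε := epsP_pos hβ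
  have hε16 := epsP_lt hβ0
  set ε := epsP β with hεdef
  set M := MP β
  have hMreal := MP_ge hβ
  have hM1 := MP_ge_one hβ
  have hs1n : s1 ≤ n := le_trans (le_trans (Nat.le_add_right _ _) hn0) hn
  -- the walk is ≥ M on [s1, n]
  have hMk : ∀ k, s1 ≤ k → (M:ℝ) ≤ wk u c k := fun k hk =>
    phase1 hβ0 hβ h3 (le_trans hs1 hk) (h1 k hk)
  -- phase 2 growth
  have hq1 : (1 + ε)⁻¹ ≤ 1 := by
    rw [inv_le_one_iff₀]; right; linarith
  have hq0 : (0:ℝ) ≤ (1 + ε)⁻¹ := by positivity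
  have hA1 : 1 ≤ (M:ℝ) * (1 - (1+ε)⁻¹) := by
    have he : 1 - (1+ε)⁻¹ = ε/(1+ε) := by
      field_simp; ring
    rw [he]
    calc (1:ℝ) = ((1+ε)/ε) * (ε/(1+ε)) := by
          field_simp
      _ ≤ (M:ℝ) * (ε/(1+ε)) := by
          apply mul_le_mul_of_nonneg_right hMreal
          positivity
  have hgrow := grow (c := c) (u := u) (A := (M:ℝ)) (q := (1+ε)⁻¹) hq0 hq1 hA1 n hs1n
    (fun k hk _ => hMk k hk)
  set h := hd c s1 n
  set t := tl c s1 n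
  have hht : h + t = n - s1 := hd_add_tl c s1 n
  have hhtR : (h:ℝ) + t = (n:ℝ) - s1 := by
    have := congrArg (fun x : ℕ => (x:ℝ)) hht
    push_cast [Nat.cast_sub hs1n] at this ⊢
    linarith [this]
  -- (1+ε)^{-t} ≥ 2^{-2εt}
  have h2eps : (1:ℝ) + ε ≤ (2:ℝ) ^ (2*ε) := by
    rw [Real.rpow_def_of_pos (by norm_num), mul_comm (Real.log 2)]
    have hlog2 : (0.6931471803:ℝ) < Real.log 2 := Real.log_two_gt_d9
    have := Real.add_one_le_exp (2 * ε * Real.log 2)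
    nlinarith
  have hstep : ((2:ℝ) ^ (-(2*ε))) ^ t ≤ ((1+ε)⁻¹) ^ t := by
    apply pow_le_pow_left₀ (by positivity)
    rw [Real.rpow_neg (by norm_num)]
    exact inv_anti₀ (by linarith) h2eps
  have hstep2 : ((2:ℝ) ^ (-(2*ε))) ^ t = (2:ℝ) ^ (-(2*ε) * t) := by
    rw [← Real.rpow_natCast ((2:ℝ) ^ (-(2*ε))) t, ← Real.rpow_mul (by norm_num)]
  have hpow2h : ((2:ℝ)) ^ (h:ℕ) = (2:ℝ) ^ ((h:ℕ):ℝ) := by rw [Real.rpow_natCast]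
  -- main lower bound
  have hlower : (2:ℝ) ^ ((h:ℝ) + (-(2*ε) * t)) ≤ wk u c n := by
    calc (2:ℝ) ^ ((h:ℝ) + (-(2*ε) * t)) = (2:ℝ) ^ ((h:ℝ)) * (2:ℝ) ^ (-(2*ε)*t) := by
          rw [Real.rpow_add (by norm_num)]
      _ = (2:ℝ) ^ (h:ℕ) * ((2:ℝ) ^ (-(2*ε))) ^ t := by rw [hpow2h, hstep2]
      _ ≤ (M:ℝ) * (2 ^ (h:ℕ) * ((1+ε)⁻¹) ^ t) := by
          have hp : (0:ℝ) ≤ (2:ℝ)^(h:ℕ) := by positivity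
          have step1 : (2:ℝ)^(h:ℕ) * ((2:ℝ) ^ (-(2*ε))) ^ t ≤ 2^(h:ℕ) * ((1+ε)⁻¹) ^ t :=
            mul_le_mul_of_nonneg_left hstep hp
          have step2 : (2:ℝ)^(h:ℕ) * ((1+ε)⁻¹) ^ t ≤ (M:ℝ) * (2^(h:ℕ) * ((1+ε)⁻¹) ^ t) :=
            le_mul_of_one_le_left (mul_nonneg hp (pow_nonneg hq0 t)) hM1
          exact le_trans step1 step2
      _ ≤ wk u c s1 * (2 ^ h * ((1+ε)⁻¹) ^ t) := by
          have base : (M:ℝ) ≤ wk u c s1 := hMk s1 (le_refl s1)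
          have hp : (0:ℝ) ≤ (2:ℝ)^(h:ℕ) * ((1+ε)⁻¹) ^ t := by positivity
          exact mul_le_mul_of_nonneg_right base hp
      _ = wk u c s1 * 2 ^ h * ((1+ε)⁻¹) ^ t := by ring
      _ ≤ wk u c n := hgrow
  -- exponent bound
  have hLn : ((s1:ℝ))/(10*ε) ≤ (n:ℝ) - s1 := by
    have hceil : ((s1:ℝ))/(10*ε) ≤ (⌈(s1:ℝ)/(10 * ε)⌉₊ : ℝ) := Nat.le_ceil _
    have hnn : s1 + ⌈(s1:ℝ)/(10 * ε)⌉₊ ≤ n := hn0.trans hn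
    have hcast : ((s1 + ⌈(s1:ℝ)/(10 * ε)⌉₊ : ℕ) : ℝ) ≤ (n:ℝ) := Nat.cast_le.mpr hnn
    push_cast at hcast
    linarith
  have hexp : (n:ℝ) * β ≤ (h:ℝ) + (-(2*ε) * t) := by
    have hhL : ((1:ℝ)/2 - ε) * ((n:ℝ) - s1) ≤ (h:ℝ) := h2 n hn
    have hβε : β = 1/2 - 8*ε := by rw [hεdef]; unfold epsP; ring
    have hs1nn : (0:ℝ) ≤ (s1:ℝ) := Nat.cast_nonneg _
    set L : ℝ := (n:ℝ) - s1 with hLdef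
    have hL0 : (0:ℝ) ≤ L := by
      rw [hLdef]
      have : (s1:ℝ) ≤ (n:ℝ) := Nat.cast_le.mpr hs1n
      linarith
    have ht' : (t:ℝ) = L - h := by rw [hLdef]; linarith [hhtR]
    have k1 : (h:ℝ) + (-(2*ε) * t) = (1+2*ε)*h - 2*ε*L := by rw [ht']; ring
    have k2 : (1+2*ε)*((1/2-ε)*L) ≤ (1+2*ε)*h := mul_le_mul_of_nonneg_left hhL (by linarith)
    have k4 : (n:ℝ)*β = L*β + s1*β := by rw [hLdef]; ring
    have k5 : (s1:ℝ)*β ≤ s1*(1/2) := mul_le_mul_of_nonneg_left (le_of_lt hβ) hs1nn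
    have k6 : (s1:ℝ)*(1/2) ≤ L*(5*ε) := by
      have := mul_le_mul_of_nonneg_right hLn (show (0:ℝ) ≤ 5*ε by linarith)
      calc (s1:ℝ)*(1/2) = (s1:ℝ)/(10*ε)*(5*ε) := by field_simp; ring
        _ ≤ L*(5*ε) := this
    have k7 : L*β + L*(5*ε) ≤ L*(1/2-ε-2*ε^2) := by nlinarith
    nlinarith [k1, k2, k4, k5, k6, k7]
  calc (2:ℝ) ^ ((n:ℝ) * β) ≤ (2:ℝ) ^ ((h:ℝ) + (-(2*ε) * t)) :=
        Real.rpow_le_rpow_of_exponent_le (by norm_num) hexp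
    _ ≤ wk u c n := hlower

end det
section events

lemma card_div_le {cN L : ℕ} {y : ℝ} (hy : 0 ≤ y) (h : (cN:ℝ) ≤ y * 2^L) :
    (cN : ℝ≥0∞) * 2⁻¹^L ≤ ENNReal.ofReal y := by
  have h2L : ((2:ℝ≥0∞))⁻¹^L = ENNReal.ofReal ((2:ℝ)⁻¹^L) := by
    rw [ENNReal.ofReal_pow (by norm_num), ENNReal.ofReal_inv_of_pos (by norm_num)]
    norm_num
  rw [h2L, ← ENNReal.ofReal_natCast cN, ← ENNReal.ofReal_mul (Nat.cast_nonneg _)]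
  apply ENNReal.ofReal_le_ofReal
  have h2p : (0:ℝ) < 2^L := by positivity
  rw [show ((2:ℝ)⁻¹)^L = ((2:ℝ)^L)⁻¹ by rw [inv_pow]]
  have h2 := (div_le_iff₀ h2p).mpr h
  rwa [div_eq_mul_inv] at h2

lemma hd_eq_finL (c : ℕ → Bool) (a L : ℕ) :
    hd c a L = (((univ : Finset (Fin L)).filter (fun i => a ≤ i.1)).filter
      (fun i => c i.1 = true)).card := by
  unfold hd
  refine Finset.card_bij'
    (fun k hk => (⟨k, (Finset.mem_Ico.mp (Finset.mem_filter.mp hk).1).2⟩ : Fin L))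
    (fun i _ => i.1) ?_ ?_ ?_ ?_
  case refine_1 =>
    intro k hk
    have h1 := Finset.mem_filter.mp hk
    have h2 := Finset.mem_Ico.mp h1.1
    simp only [Finset.mem_filter, Finset.mem_univ, true_and]
    exact ⟨h2.1, h1.2⟩
  case refine_2 =>
    intro i hi
    have h1 := Finset.mem_filter.mp hi
    have h2 := Finset.mem_filter.mp h1.1
    rw [Finset.mem_filter, Finset.mem_Ico]
    exact ⟨⟨h2.2, i.2⟩, h1.2⟩
  case refine_3 => intro k hk; rfl
  case refine_4 => intro i hi; rfl

lemma window_card (a L : ℕ) (haL : a ≤ L) :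
    ((univ : Finset (Fin L)).filter (fun i => a ≤ i.1)).card = L - a := by
  have h := hd_eq_finL (fun _ => true) a L
  unfold hd at h
  rw [Finset.filter_true_of_mem (fun _ _ => rfl), Nat.card_Ico] at h
  rw [Finset.filter_true_of_mem (fun _ _ => rfl)] at h
  exact h.symm

variable {Ω : Type} [MeasurableSpace Ω] {μ : Measure Ω} [IsProbabilityMeasure μ]
  (B : ℕ → Ω → Bool) (hBmeas : ∀ n, Measurable (B n))
  (hInd : iIndepFun B μ)
  (hfair : ∀ n, μ (B n ⁻¹' {true}) = 1 / 2)

include hBmeas hInd hfair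

open Classical in
lemma chernoffEvent {β : ℝ} (hβ0 : 0 < β) (hβ : β < 1/2) (a L : ℕ) (haL : a ≤ L) :
    μ {ω | ((hd (fun k => B (k+1) ω) a L : ℝ)) < (1/2 - epsP β) * ((L:ℝ) - a)}
      ≤ ENNReal.ofReal ((thetaP β)^(L - a)) := by
  have hε := epsP_pos hβ
  have hε16 := epsP_lt hβ0
  set ε := epsP β with hεdef
  set Wd : Finset (Fin L) := (univ : Finset (Fin L)).filter (fun i => a ≤ i.1) with hWd
  set P : (Fin L → Bool) → Prop := fun v =>
    ((Wd.filter (fun i => v i = true)).card : ℝ) < (1/2 - ε) * ((L:ℝ) - a) with hP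
  have hset : {ω | ((hd (fun k => B (k+1) ω) a L : ℝ)) < (1/2 - ε) * ((L:ℝ) - a)}
      = {ω | P (fun i : Fin L => B (i.1 + 1) ω)} := by
    ext ω
    simp only [Set.mem_setOf_eq, hP]
    rw [hd_eq_finL (fun k => B (k+1) ω) a L]
  rw [hset, cyl B hBmeas hInd hfair L P]
  set m := L - a with hm
  have hmcast : ((L:ℝ) - a) = (m:ℝ) := by rw [hm, Nat.cast_sub haL]
  set x : ℝ := (1/2 - ε) * ((L:ℝ) - a) with hx
  have hx0 : 0 ≤ x := by
    rw [hx, hmcast]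
    have : (0:ℝ) ≤ (m:ℝ) := Nat.cast_nonneg _
    nlinarith
  have hz : (1:ℝ) ≤ 1 + ε := by linarith
  have hsub : (univ : Finset (Fin L → Bool)).filter P ⊆
      (univ : Finset (Fin L → Bool)).filter
        (fun v => ((Wd.filter (fun i => v i = true)).card : ℝ) ≤ x) := by
    intro v hv
    simp only [Finset.mem_filter] at hv ⊢
    exact ⟨hv.1, le_of_lt hv.2⟩
  have hcount := chernoff_count L Wd x (1+ε) hx0 hz
  have hcard : (((univ : Finset (Fin L → Bool)).filter P).card : ℝ)
      ≤ (1+ε) ^ x * (1 + 1/(1+ε)) ^ Wd.card * 2 ^ (L - Wd.card) := by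
    calc (((univ : Finset (Fin L → Bool)).filter P).card : ℝ)
        ≤ (((univ : Finset (Fin L → Bool)).filter
            (fun v => ((Wd.filter (fun i => v i = true)).card : ℝ) ≤ x)).card : ℝ) := by
          exact_mod_cast Finset.card_le_card hsub
      _ ≤ _ := hcount
  have hWdcard : Wd.card = L - a := by rw [hWd]; exact window_card a L haL
  rw [hWdcard] at hcard
  have hLma : L - (L - a) = a := by omega
  rw [hLma] at hcard
  -- algebra: (1+ε)^x (1+1/(1+ε))^m 2^a = θ^m 2^L
  have halg : (1+ε) ^ x * (1 + 1/(1+ε)) ^ m * 2 ^ a = (thetaP β)^m * 2^L := by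
    have h1 : (1+ε) ^ x = ((1+ε) ^ ((1:ℝ)/2 - ε)) ^ m := by
      rw [hx, hmcast, mul_comm]
      rw [← Real.rpow_natCast ((1+ε) ^ ((1:ℝ)/2 - ε)) m, ← Real.rpow_mul (by linarith)]
      congr 1
      push_cast
      ring
    have h2 : (2:ℝ)^m * 2^a = 2^L := by
      rw [← pow_add]
      congr 1
      omega
    rw [h1, ← mul_pow, theta_factor hβ0 hβ, mul_pow,
      show (2:ℝ)^m * thetaP β ^ m * 2^a = thetaP β ^ m * ((2:ℝ)^m * 2^a) by ring, h2]
  apply card_div_le (pow_nonneg (le_of_lt (thetaP_pos hβ0 hβ)) m)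
  rw [← halg]
  exact hcard

open Classical in
lemma fibEvent (u : ℝ) (N : ℕ) :
    μ {ω | ∃ k ≤ N, wk u (fun j => B (j+1) ω) k < 3}
      ≤ ENNReal.ofReal (phiR ^ (3 - u)) := by
  have hset : {ω | ∃ k ≤ N, wk u (fun j => B (j+1) ω) k < 3}
      = {ω | hitsP u N (fun i : Fin N => B (i.1 + 1) ω)} := by
    ext ω
    simp only [Set.mem_setOf_eq, hitsP]
    constructor
    · rintro ⟨k, hk, hlt⟩
      refine ⟨k, hk, ?_⟩
      rw [wk_congr (c' := fun j => B (j+1) ω)]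
      · exact hlt
      · intro i hi
        have hiN : i < N := lt_of_lt_of_le hi hk
        simp only [extB, dif_pos hiN]
    · rintro ⟨k, hk, hlt⟩
      refine ⟨k, hk, ?_⟩
      rw [wk_congr (c' := extB (fun i : Fin N => B (i.1 + 1) ω))]
      · exact hlt
      · intro i hi
        have hiN : i < N := lt_of_lt_of_le hi hk
        simp only [extB, dif_pos hiN]
  rw [hset, cyl B hBmeas hInd hfair N (hitsP u N)]
  have hcnt := cntF_eq_card N u
  rw [show ((univ : Finset (Fin N → Bool)).filter (hitsP u N)) =
    (univ : Finset (Fin N → Bool)).filter (hitsP u N) from rfl, hcnt]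
  apply card_div_le (le_of_lt (Real.rpow_pos_of_pos phiR_pos _))
  exact cntF_le N u

end events
lemma deltaP_eq {η : ℝ} (hη : 0 < η) :
    deltaP η = 2 * phiR ^ ((2:ℝ) - (-1 - Real.logb 2 η)) := by
  unfold deltaP
  rw [← phiR]
  congr 1
  have h8 : (0:ℝ) < 8 * η := by linarith
  have hl2 : Real.log 2 ≠ 0 := by
    have := Real.log_two_gt_d9; intro h; rw [h] at this; norm_num at this
  rw [Real.rpow_def_of_pos h8, Real.rpow_def_of_pos phiR_pos]
  congr 1
  have hlog8 : Real.log (8 * η) = 3 * Real.log 2 + Real.log η := by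
    rw [Real.log_mul (by norm_num) (ne_of_gt hη)]
    rw [show (8:ℝ) = 2^(3:ℕ) by norm_num, Real.log_pow]
    push_cast; ring
  rw [Real.logb, Real.logb, hlog8]
  field_simp
  ring

lemma deltaP_pos {η : ℝ} (hη : 0 < η) : 0 < deltaP η := by
  unfold deltaP
  have : (0:ℝ) < (8 * η) ^ Real.logb 2 ((1 + Real.sqrt 5) / 2) :=
    Real.rpow_pos_of_pos (by linarith) _
  linarith

lemma phi_three_le {u : ℝ} : phiR ^ ((3:ℝ) - u) ≤ 2 * phiR ^ ((2:ℝ) - u) := by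
  have h : ((3:ℝ) - u) = 1 + (2 - u) := by ring
  rw [h, Real.rpow_add phiR_pos, Real.rpow_one]
  have := Real.rpow_pos_of_pos phiR_pos ((2:ℝ) - u)
  nlinarith [phiR_le_two]

/-- geometric tail sum bound in `ℝ≥0∞`. -/
lemma geom_tail {θ : ℝ} (hθ0 : 0 ≤ θ) (hθ1 : θ < 1) (c : ℕ) {y : ℝ}
    (hy : θ^c ≤ y * (1-θ)) : ∑' k:ℕ, ENNReal.ofReal (θ^(c+k)) ≤ ENNReal.ofReal y := by
  have hsum : Summable (fun k:ℕ => θ^(c+k)) := by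
    simp_rw [pow_add]
    exact (summable_geometric_of_lt_one hθ0 hθ1).mul_left _
  rw [← ENNReal.ofReal_tsum_of_nonneg (fun k => by positivity) hsum]
  apply ENNReal.ofReal_le_ofReal
  have htsum : (∑' k:ℕ, θ^(c+k)) = θ^c * (1-θ)⁻¹ := by
    simp_rw [pow_add]
    rw [tsum_mul_left, tsum_geometric_of_lt_one hθ0 hθ1]
  rw [htsum]
  have h1θ : (0:ℝ) < 1 - θ := by linarith
  rw [← div_eq_mul_inv, div_le_iff₀ h1θ]
  exact hy

theorem strong_polarization_of_bounded_process' :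
    ∃ n₀fun : ℝ → ℝ → ℕ,
      ∀ (β η δ : ℝ), 0 < β → β < 1 / 2 → 0 < η → deltaP η < δ →
      ∀ (Ω : Type) (_ : MeasurableSpace Ω) (μ : Measure Ω), IsProbabilityMeasure μ →
      ∀ (B : ℕ → Ω → Bool) (S : ℕ → Ω → ℝ),
        (∀ n, Measurable (B n)) →
        iIndepFun B μ →
        (∀ n, μ (B n ⁻¹' {true}) = 1 / 2) →
        (∀ ω n, S n ω ∈ Set.Icc (0 : ℝ) 1) →
        (∀ ω n, B (n + 1) ω = false → S (n + 1) ω ≤ 2 * S n ω) →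
        (∀ ω n, B (n + 1) ω = true → S (n + 1) ω ≤ 2 * (S n ω) ^ 2) →
        (∀ ω, S 0 ω ≤ η) →
        ENNReal.ofReal (1 - δ) ≤
          μ {ω | ∀ n : ℕ, n₀fun β (δ - deltaP η) ≤ n →
            S n ω ≤ (2 : ℝ) ^ (-((2 : ℝ) ^ ((n : ℝ) * β)))} := by
  refine ⟨n0P, ?_⟩
  intro β η δ hβ0 hβ hη hδ Ω mΩ μ hProb B S hBmeas hInd hfair hIcc hF hT h0
  -- basic constants
  set ρ : ℝ := δ - deltaP η with hρdef
  have hρ : 0 < ρ := by rw [hρdef]; linarith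
  have hδ0 : 0 < δ := lt_trans (deltaP_pos hη) hδ
  set ε := epsP β with hεdef
  have hε := epsP_pos hβ
  set θ := thetaP β with hθdef
  have hθ0 := thetaP_pos hβ0 hβ
  have hθ1 := thetaP_lt_one hβ0 hβ
  set s1 := s1P β ρ with hs1def
  set n0 := n0P β ρ with hn0def
  set u₀ : ℝ := -1 - Real.logb 2 η with hu₀def
  set c : Ω → ℕ → Bool := fun ω k => B (k + 1) ω with hcdef
  -- pathwise bound
  have hPW : ∀ ω n, S n ω ≤ (2:ℝ) ^ (-(wk u₀ (c ω) n + 1)) := by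
    intro ω n
    induction n with
    | zero =>
      have : (2:ℝ) ^ (-(u₀ + 1)) = η := by
        rw [show -(u₀ + 1) = Real.logb 2 η by rw [hu₀def]; ring]
        exact Real.rpow_logb (by norm_num) (by norm_num) hη
      calc S 0 ω ≤ η := h0 ω
        _ = (2:ℝ) ^ (-(u₀ + 1)) := this.symm
        _ = (2:ℝ) ^ (-(wk u₀ (c ω) 0 + 1)) := rfl
    | succ n ih =>
      have hWn : wk u₀ (c ω) (n+1) = stepW (wk u₀ (c ω) n) (B (n+1) ω) := rfl
      set W := wk u₀ (c ω) n with hWdef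
      cases hB : B (n + 1) ω
      · have hstep : wk u₀ (c ω) (n+1) = W - 1 := by
          rw [hWn, hB]; rfl
        have h2 : S (n+1) ω ≤ 2 * S n ω := hF ω n hB
        calc S (n+1) ω ≤ 2 * S n ω := h2
          _ ≤ 2 * (2:ℝ) ^ (-(W + 1)) := by linarith [ih]
          _ = (2:ℝ) ^ (1 + -(W + 1)) := by
              rw [Real.rpow_add (by norm_num), Real.rpow_one]
          _ = (2:ℝ) ^ (-(wk u₀ (c ω) (n+1) + 1)) := by
              rw [hstep]; congr 1; ring
      · have hstep : wk u₀ (c ω) (n+1) = 2 * W := by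
          rw [hWn, hB]; rfl
        have h2 : S (n+1) ω ≤ 2 * (S n ω)^2 := hT ω n hB
        have hSnn : 0 ≤ S n ω := (hIcc ω n).1
        have hsq : (S n ω)^2 ≤ ((2:ℝ) ^ (-(W + 1)))^2 := by
          apply pow_le_pow_left₀ hSnn ih
        have hsq2 : ((2:ℝ) ^ (-(W + 1)))^2 = (2:ℝ) ^ (2 * -(W+1)) := by
          rw [← Real.rpow_natCast ((2:ℝ) ^ (-(W+1))) 2, ← Real.rpow_mul (by norm_num)]
          congr 1; push_cast; ring
        calc S (n+1) ω ≤ 2 * (S n ω)^2 := h2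
          _ ≤ 2 * (2:ℝ) ^ (2 * -(W+1)) := by
              rw [← hsq2]; linarith [hsq]
          _ = (2:ℝ) ^ (1 + 2 * -(W+1)) := by
              rw [Real.rpow_add (by norm_num), Real.rpow_one]
          _ = (2:ℝ) ^ (-(wk u₀ (c ω) (n+1) + 1)) := by
              rw [hstep]; congr 1; ring
  -- the good event
  set A3 : Set Ω := {ω | ∀ j, 3 ≤ wk u₀ (c ω) j} with hA3def
  set B1 : Set Ω := {ω | ∀ s, s1 ≤ s → ((1:ℝ)/2 - ε) * s ≤ (hd (c ω) 0 s : ℝ)} with hB1def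
  set C1 : Set Ω := {ω | ∀ n, n0 ≤ n →
    ((1:ℝ)/2 - ε) * ((n:ℝ) - s1) ≤ (hd (c ω) s1 n : ℝ)} with hC1def
  set G : Set Ω := A3 ∩ (B1 ∩ C1) with hGdef
  -- G is contained in the target
  have hsub : G ⊆ {ω | ∀ n : ℕ, n0 ≤ n → S n ω ≤ (2 : ℝ) ^ (-((2 : ℝ) ^ ((n : ℝ) * β)))} := by
    rintro ω ⟨hA, hB1ω, hC1ω⟩
    intro n hn
    have hs1c : 16 * MP β ≤ s1 := by rw [hs1def]; exact le_max_left _ _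
    have hn0c : s1 + ⌈(s1:ℝ)/(10 * ε)⌉₊ ≤ n0 := by
      rw [hεdef, hs1def, hn0def]
      unfold n0P
      omega
    have hdet := detLemma hβ0 hβ hs1c hn0c hA hB1ω hC1ω hn
    have hW1 : (2:ℝ) ^ ((n:ℝ) * β) ≤ wk u₀ (c ω) n + 1 := by linarith
    calc S n ω ≤ (2:ℝ) ^ (-(wk u₀ (c ω) n + 1)) := hPW ω n
      _ ≤ (2 : ℝ) ^ (-((2 : ℝ) ^ ((n : ℝ) * β))) := by
          apply Real.rpow_le_rpow_of_exponent_le (by norm_num)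
          linarith
  -- measurability
  have hBset : ∀ j, MeasurableSet {ω | B j ω = true} := by
    intro j
    have h : {ω | B j ω = true} = B j ⁻¹' {true} := rfl
    rw [h]
    exact (hBmeas j) (by trivial)
  have hwkMeas : ∀ k, Measurable (fun ω => wk u₀ (c ω) k) := by
    intro k
    induction k with
    | zero => exact measurable_const
    | succ k ih =>
      have : (fun ω => wk u₀ (c ω) (k+1))
          = fun ω => if B (k+1) ω = true then 2 * wk u₀ (c ω) k else wk u₀ (c ω) k - 1 := by
        funext ω
        show stepW (wk u₀ (c ω) k) (B (k+1) ω) = _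
        unfold stepW
        rfl
      rw [this]
      exact Measurable.ite (hBset (k+1)) (measurable_const.mul ih) (ih.sub measurable_const)
  have hhdMeas : ∀ a L, Measurable (fun ω => ((hd (c ω) a L : ℕ) : ℝ)) := by
    intro a L
    have heq : (fun ω => ((hd (c ω) a L : ℕ) : ℝ))
        = fun ω => ∑ k ∈ Finset.Ico a L, (if B (k+1) ω = true then (1:ℝ) else 0) := by
      funext ω
      rw [hd, Finset.card_filter]
      push_cast
      rfl
    rw [heq]
    exact Finset.measurable_sum _ (fun k _ =>
      Measurable.ite (hBset (k+1)) measurable_const measurable_const)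
  have hA3meas : MeasurableSet A3 := by
    rw [hA3def, Set.setOf_forall]
    exact MeasurableSet.iInter (fun j => measurableSet_le measurable_const (hwkMeas j))
  have hB1meas : MeasurableSet B1 := by
    rw [hB1def, Set.setOf_forall]
    apply MeasurableSet.iInter
    intro s
    by_cases hs : s1 ≤ s
    · simp only [hs, forall_true_left]
      exact measurableSet_le measurable_const (hhdMeas 0 s)
    · have : {ω : Ω | s1 ≤ s → ((1:ℝ)/2 - ε) * s ≤ (hd (c ω) 0 s : ℝ)} = Set.univ := by
        ext ω; simp [hs]
      rw [this]; exact MeasurableSet.univ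
  have hC1meas : MeasurableSet C1 := by
    rw [hC1def, Set.setOf_forall]
    apply MeasurableSet.iInter
    intro n
    by_cases hn : n0 ≤ n
    · simp only [hn, forall_true_left]
      exact measurableSet_le measurable_const (hhdMeas s1 n)
    · have : {ω : Ω | n0 ≤ n → ((1:ℝ)/2 - ε) * ((n:ℝ) - s1) ≤ (hd (c ω) s1 n : ℝ)}
          = Set.univ := by
        ext ω; simp [hn]
      rw [this]; exact MeasurableSet.univ
  have hGmeas : MeasurableSet G := hA3meas.inter (hB1meas.inter hC1meas)
  -- bound on μ A3ᶜ
  have hA3c : μ A3ᶜ ≤ ENNReal.ofReal (phiR ^ ((3:ℝ) - u₀)) := by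
    have hdecomp : A3ᶜ = ⋃ N : ℕ, {ω | ∃ k ≤ N, wk u₀ (c ω) k < 3} := by
      rw [hA3def]
      ext ω
      simp only [Set.mem_compl_iff, Set.mem_setOf_eq, Set.mem_iUnion, not_forall, not_le]
      constructor
      · rintro ⟨j, hj⟩; exact ⟨j, j, le_refl j, hj⟩
      · rintro ⟨N, k, _, hk⟩; exact ⟨k, hk⟩
    rw [hdecomp]
    rw [Directed.measure_iUnion]
    · apply iSup_le
      intro N
      exact fibEvent B hBmeas hInd hfair u₀ N
    · apply Monotone.directed_le
      intro N M hNM ω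
      simp only [Set.mem_setOf_eq]
      rintro ⟨k, hk, hlt⟩
      exact ⟨k, le_trans hk hNM, hlt⟩
  -- bound on μ B1ᶜ
  have hB1c : μ B1ᶜ ≤ ENNReal.ofReal (ρ/2) := by
    have hdecomp : B1ᶜ ⊆ ⋃ k : ℕ,
        {ω | ((hd (c ω) 0 (s1 + k) : ℝ)) < (1/2 - ε) * (((s1 + k : ℕ):ℝ) - (0:ℕ))} := by
      intro ω hω
      simp only [hB1def, Set.mem_compl_iff, Set.mem_setOf_eq, not_forall, not_le] at hω
      obtain ⟨s, hs1s, hlt⟩ := hω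
      simp only [Set.mem_iUnion, Set.mem_setOf_eq]
      refine ⟨s - s1, ?_⟩
      have hss : s1 + (s - s1) = s := by omega
      rw [hss]
      push_cast
      simpa using hlt
    calc μ B1ᶜ ≤ μ (⋃ k : ℕ,
        {ω | ((hd (c ω) 0 (s1 + k) : ℝ)) < (1/2 - ε) * (((s1 + k : ℕ):ℝ) - (0:ℕ))}) :=
          measure_mono hdecomp
      _ ≤ ∑' k : ℕ, μ {ω | ((hd (c ω) 0 (s1 + k) : ℝ))
            < (1/2 - ε) * (((s1 + k : ℕ):ℝ) - (0:ℕ))} := measure_iUnion_le _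
      _ ≤ ∑' k : ℕ, ENNReal.ofReal (θ ^ (s1 + k)) := by
          apply ENNReal.tsum_le_tsum
          intro k
          have := chernoffEvent B hBmeas hInd hfair hβ0 hβ 0 (s1 + k) (Nat.zero_le _)
          simpa using this
      _ ≤ ENNReal.ofReal (ρ/2) := by
          apply geom_tail (le_of_lt hθ0) hθ1
          have hs1N1 : N1P β ρ ≤ s1 := by rw [hs1def]; exact le_max_right _ _
          calc θ ^ s1 ≤ θ ^ (N1P β ρ) := pow_le_pow_of_le_one (le_of_lt hθ0)
                (le_of_lt hθ1) hs1N1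
            _ ≤ ρ * (1 - θ)/2 := N1P_spec hβ0 hβ hρ
            _ = ρ/2 * (1 - θ) := by ring
  -- bound on μ C1ᶜ
  have hs1n0 : s1 ≤ n0 := by rw [hn0def, hs1def]; unfold n0P; omega
  have hC1c : μ C1ᶜ ≤ ENNReal.ofReal (ρ/2) := by
    have hdecomp : C1ᶜ ⊆ ⋃ j : ℕ,
        {ω | ((hd (c ω) s1 (n0 + j) : ℝ)) < (1/2 - ε) * (((n0 + j : ℕ):ℝ) - (s1:ℕ))} := by
      intro ω hω
      simp only [hC1def, Set.mem_compl_iff, Set.mem_setOf_eq, not_forall, not_le] at hω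
      obtain ⟨n, hn0n, hlt⟩ := hω
      simp only [Set.mem_iUnion, Set.mem_setOf_eq]
      refine ⟨n - n0, ?_⟩
      have hnn : n0 + (n - n0) = n := by omega
      rw [hnn]
      exact hlt
    calc μ C1ᶜ ≤ μ (⋃ j : ℕ,
        {ω | ((hd (c ω) s1 (n0 + j) : ℝ)) < (1/2 - ε) * (((n0 + j : ℕ):ℝ) - (s1:ℕ))}) :=
          measure_mono hdecomp
      _ ≤ ∑' j : ℕ, μ {ω | ((hd (c ω) s1 (n0 + j) : ℝ))
            < (1/2 - ε) * (((n0 + j : ℕ):ℝ) - (s1:ℕ))} := measure_iUnion_le _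
      _ ≤ ∑' j : ℕ, ENNReal.ofReal (θ ^ ((n0 - s1) + j)) := by
          apply ENNReal.tsum_le_tsum
          intro j
          have hle : s1 ≤ n0 + j := le_trans hs1n0 (Nat.le_add_right _ _)
          have := chernoffEvent B hBmeas hInd hfair hβ0 hβ s1 (n0 + j) hle
          have harith : n0 + j - s1 = (n0 - s1) + j := by omega
          rw [harith] at this
          exact this
      _ ≤ ENNReal.ofReal (ρ/2) := by
          apply geom_tail (le_of_lt hθ0) hθ1
          have hn0N1 : N1P β ρ ≤ n0 - s1 := by
            rw [hn0def, hs1def]; unfold n0P s1P; omega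
          calc θ ^ (n0 - s1) ≤ θ ^ (N1P β ρ) := pow_le_pow_of_le_one (le_of_lt hθ0)
                (le_of_lt hθ1) hn0N1
            _ ≤ ρ * (1 - θ)/2 := N1P_spec hβ0 hβ hρ
            _ = ρ/2 * (1 - θ) := by ring
  -- total bound on μ Gᶜ
  have hGc : μ Gᶜ ≤ ENNReal.ofReal δ := by
    have hsplit : Gᶜ = A3ᶜ ∪ (B1ᶜ ∪ C1ᶜ) := by
      rw [hGdef, Set.compl_inter, Set.compl_inter]
    have hphi : phiR ^ ((3:ℝ) - u₀) ≤ deltaP η := by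
      rw [deltaP_eq hη, ← hu₀def]
      exact phi_three_le
    calc μ Gᶜ ≤ μ A3ᶜ + (μ B1ᶜ + μ C1ᶜ) := by
          rw [hsplit]
          exact le_trans (measure_union_le _ _)
            (add_le_add_right (measure_union_le _ _) _)
      _ ≤ ENNReal.ofReal (phiR ^ ((3:ℝ) - u₀))
            + (ENNReal.ofReal (ρ/2) + ENNReal.ofReal (ρ/2)) :=
          add_le_add hA3c (add_le_add hB1c hC1c)
      _ ≤ ENNReal.ofReal (deltaP η) + (ENNReal.ofReal (ρ/2) + ENNReal.ofReal (ρ/2)) := by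
          exact add_le_add_left (ENNReal.ofReal_le_ofReal hphi) _
      _ = ENNReal.ofReal δ := by
          rw [← ENNReal.ofReal_add (by linarith) (by linarith),
            ← ENNReal.ofReal_add (le_of_lt (deltaP_pos hη)) (by linarith)]
          congr 1
          rw [hρdef]
          ring
  -- conclusion
  rcases le_or_gt δ 1 with hδ1 | hδ1
  · have hμG : ENNReal.ofReal (1 - δ) ≤ μ G := by
      have h1 : μ G = 1 - μ Gᶜ := by
        rw [← MeasureTheory.prob_compl_eq_one_sub hGmeas.compl, compl_compl]
      rw [h1]
      have h2 : (1:ℝ≥0∞) - ENNReal.ofReal δ ≤ 1 - μ Gᶜ := tsub_le_tsub_left hGc 1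
      have h3 : ENNReal.ofReal (1 - δ) = 1 - ENNReal.ofReal δ := by
        rw [ENNReal.ofReal_sub 1 (le_of_lt hδ0), ENNReal.ofReal_one]
      rw [h3]
      exact h2
    exact le_trans hμG (measure_mono hsub)
  · have : ENNReal.ofReal (1 - δ) = 0 := by
      rw [ENNReal.ofReal_eq_zero]
      linarith
    rw [this]
    exact zero_le


/-- Strong polarization of a `[0,1]`-valued process driven by i.i.d. fair coins that
at most doubles on tails and at most doubles-the-square on heads: there is a threshold
`n₀ = n₀(β, δ - δ'(η))` such that `S₀ ≤ η` implies
`Pr(S_n ≤ 2^{-2^{nβ}} for all n ≥ n₀) ≥ 1 - δ`. -/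
theorem strong_polarization_of_bounded_process :
    ∃ n₀fun : ℝ → ℝ → ℕ,
      ∀ (β η δ : ℝ), 0 < β → β < 1 / 2 → 0 < η → deltaP η < δ →
      ∀ (Ω : Type) (_ : MeasurableSpace Ω) (μ : Measure Ω), IsProbabilityMeasure μ →
      ∀ (B : ℕ → Ω → Bool) (S : ℕ → Ω → ℝ),
        (∀ n, Measurable (B n)) →
        iIndepFun B μ →
        (∀ n, μ (B n ⁻¹' {true}) = 1 / 2) →
        (∀ ω n, S n ω ∈ Set.Icc (0 : ℝ) 1) →
        (∀ ω n, B (n + 1) ω = false → S (n + 1) ω ≤ 2 * S n ω) →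
        (∀ ω n, B (n + 1) ω = true → S (n + 1) ω ≤ 2 * (S n ω) ^ 2) →
        (∀ ω, S 0 ω ≤ η) →
        ENNReal.ofReal (1 - δ) ≤
          μ {ω | ∀ n : ℕ, n₀fun β (δ - deltaP η) ≤ n →
            S n ω ≤ (2 : ℝ) ^ (-((2 : ℝ) ^ ((n : ℝ) * β)))} := by
  exact strong_polarization_of_bounded_process'
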